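/- Estimate (a) of the asymptotic Kepler lemma: for all masses m₁, m₂, m₃ > 0, every h > 0 and every j ≥ 0, there exist ρ₀ > 0 and c > 0 such that for every collision-free solution of the three-body problem with total energy H = −h and total angular momentum ‖J‖ ≤ j, and for every time t at which ρ(t) ≥ ρ₀ and the pair (1,2) realizes the minimal intermass distance, one has ‖J₁₂(t)‖ ≤ c, where J₁₂ = α₁ ζ × ζ̇. -/

import Mathlib

open Set

/-- The cross product on `ℝ³ = EuclideanSpace ℝ (Fin 3)`. -/
noncomputable def cross3 (a b : EuclideanSpace ℝ (Fin 3)) : EuclideanSpace ℝ (Fin 3) :=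
  WithLp.toLp 2 ![a 1 * b 2 - a 2 * b 1, a 2 * b 0 - a 0 * b 2, a 0 * b 1 - a 1 * b 0]

lemma norm_eq3 (a : EuclideanSpace ℝ (Fin 3)) :
    ‖a‖ = Real.sqrt (a 0 ^ 2 + a 1 ^ 2 + a 2 ^ 2) := by
  rw [EuclideanSpace.norm_eq]
  simp [Fin.sum_univ_three, sq_abs]

lemma cross3_norm_le (a b : EuclideanSpace ℝ (Fin 3)) :
    ‖cross3 a b‖ ≤ ‖a‖ * ‖b‖ := by
  rw [norm_eq3, norm_eq3, norm_eq3, ← Real.sqrt_mul (by positivity)]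
  apply Real.sqrt_le_sqrt
  have h0 : cross3 a b 0 = a 1 * b 2 - a 2 * b 1 := rfl
  have h1 : cross3 a b 1 = a 2 * b 0 - a 0 * b 2 := rfl
  have h2 : cross3 a b 2 = a 0 * b 1 - a 1 * b 0 := rfl
  rw [h0, h1, h2]
  nlinarith [sq_nonneg (a 0 * b 0 + a 1 * b 1 + a 2 * b 2)]

lemma kepler_arith (m₁ m₂ h M r a b α : ℝ) (hm₁ : 0 < m₁) (hm₂ : 0 < m₂) (hh : 0 < h)
    (hM : 0 < M) (hr : 0 < r) (ha : 0 ≤ a) (hb : 0 ≤ b) (hα : 0 ≤ α)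
    (hhr : h * r ≤ M) (hKar : m₁ * a ^ 2 * r ≤ 2 * M) (hKbr : m₂ * b ^ 2 * r ≤ 2 * M) :
    (α * (r * (a + b))) ^ 2 ≤ α ^ 2 * (4 * M ^ 2 * (m₁ + m₂)) / (h * m₁ * m₂) := by
  have h1 : m₁ * m₂ * (r * (a + b) ^ 2) ≤
      2 * (m₂ * (m₁ * a ^ 2 * r) + m₁ * (m₂ * b ^ 2 * r)) := by
    nlinarith [mul_nonneg (mul_nonneg (mul_nonneg hm₁.le hm₂.le) hr.le) (sq_nonneg (a - b))]
  have h2 : m₁ * m₂ * (r * (a + b) ^ 2) ≤ 4 * M * (m₁ + m₂) := by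
    nlinarith [mul_le_mul_of_nonneg_left hKar hm₂.le, mul_le_mul_of_nonneg_left hKbr hm₁.le]
  have h3 : h * (m₁ * m₂ * (r ^ 2 * (a + b) ^ 2)) ≤ 4 * M ^ 2 * (m₁ + m₂) := by
    have hX : 0 ≤ m₁ * m₂ * (r * (a + b) ^ 2) := by positivity
    calc h * (m₁ * m₂ * (r ^ 2 * (a + b) ^ 2))
        = (h * r) * (m₁ * m₂ * (r * (a + b) ^ 2)) := by ring
      _ ≤ M * (4 * M * (m₁ + m₂)) := mul_le_mul hhr h2 hX hM.le
      _ = 4 * M ^ 2 * (m₁ + m₂) := by ring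
  rw [le_div_iff₀ (by positivity)]
  calc (α * (r * (a + b))) ^ 2 * (h * m₁ * m₂)
      = α ^ 2 * (h * (m₁ * m₂ * (r ^ 2 * (a + b) ^ 2))) := by ring
    _ ≤ α ^ 2 * (4 * M ^ 2 * (m₁ + m₂)) := mul_le_mul_of_nonneg_left h3 (sq_nonneg α)

/-- **Estimate (a) of the asymptotic Kepler lemma.** For masses `m_i > 0`, `h > 0`, `j ≥ 0`
there exist `ρ₀, c > 0` such that along any collision-free solution with energy `−h` and
angular momentum of norm `≤ j`, at any time where `ρ ≥ ρ₀` and the pair `(1,2)` realizes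
the minimal intermass distance, the pair angular momentum `J₁₂ = α₁ ζ × ζ̇` has norm `≤ c`. -/
theorem asymptotic_kepler_estimate_a
    (m₁ m₂ m₃ h j : ℝ) (hm₁ : 0 < m₁) (hm₂ : 0 < m₂) (hm₃ : 0 < m₃)
    (hh : 0 < h) (hj : 0 ≤ j) :
    ∃ ρ₀ > (0:ℝ), ∃ c > (0:ℝ), ∀
      (I : Set ℝ) (hI : IsOpen I)
      (x₁ x₂ x₃ v₁ v₂ v₃ : ℝ → EuclideanSpace ℝ (Fin 3))
    -- collision-free on I
      (hsep : ∀ t ∈ I, x₁ t ≠ x₂ t ∧ x₁ t ≠ x₃ t ∧ x₂ t ≠ x₃ t)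
    -- velocities are the derivatives of the positions
      (hx₁ : ∀ t ∈ I, HasDerivAt x₁ (v₁ t) t)
      (hx₂ : ∀ t ∈ I, HasDerivAt x₂ (v₂ t) t)
      (hx₃ : ∀ t ∈ I, HasDerivAt x₃ (v₃ t) t)
    -- Newton's equations
      (hN₁ : ∀ t ∈ I, HasDerivAt v₁
      ((m₂ / ‖x₂ t - x₁ t‖ ^ 3) • (x₂ t - x₁ t) +
       (m₃ / ‖x₃ t - x₁ t‖ ^ 3) • (x₃ t - x₁ t)) t)
      (hN₂ : ∀ t ∈ I, HasDerivAt v₂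
      ((m₁ / ‖x₁ t - x₂ t‖ ^ 3) • (x₁ t - x₂ t) +
       (m₃ / ‖x₃ t - x₂ t‖ ^ 3) • (x₃ t - x₂ t)) t)
      (hN₃ : ∀ t ∈ I, HasDerivAt v₃
      ((m₁ / ‖x₁ t - x₃ t‖ ^ 3) • (x₁ t - x₃ t) +
       (m₂ / ‖x₂ t - x₃ t‖ ^ 3) • (x₂ t - x₃ t)) t)
    -- total energy equal to −h
      (hH : ∀ t ∈ I,
      (1 / 2) * (m₁ * ‖v₁ t‖ ^ 2 + m₂ * ‖v₂ t‖ ^ 2 + m₃ * ‖v₃ t‖ ^ 2) -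
        (m₁ * m₂ / ‖x₁ t - x₂ t‖ + m₁ * m₃ / ‖x₁ t - x₃ t‖ +
         m₂ * m₃ / ‖x₂ t - x₃ t‖) = -h)
    -- total angular momentum of norm at most j
      (hJ : ∀ t ∈ I,
      ‖m₁ • cross3 (x₁ t) (v₁ t) + m₂ • cross3 (x₂ t) (v₂ t) +
        m₃ • cross3 (x₃ t) (v₃ t)‖ ≤ j),
      ∀ t ∈ I,
        ρ₀ ≤ ‖x₃ t - (m₁ + m₂)⁻¹ • (m₁ • x₁ t + m₂ • x₂ t)‖ →
        (‖x₁ t - x₂ t‖ ≤ ‖x₁ t - x₃ t‖ ∧ ‖x₁ t - x₂ t‖ ≤ ‖x₂ t - x₃ t‖) →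
        ‖(m₁ * m₂ / (m₁ + m₂)) • cross3 (x₁ t - x₂ t) (v₁ t - v₂ t)‖ ≤ c := by
  set α := m₁ * m₂ / (m₁ + m₂) with hαdef
  have hα : 0 < α := by positivity
  set M := m₁ * m₂ + m₁ * m₃ + m₂ * m₃ with hMdef
  have hM : 0 < M := by positivity
  set c2 := α ^ 2 * (4 * M ^ 2 * (m₁ + m₂)) / (h * m₁ * m₂) with hc2def
  have hc2 : 0 < c2 := by positivity
  refine ⟨1, one_pos, Real.sqrt c2, Real.sqrt_pos.mpr hc2, ?_⟩
  intro I _ x₁ x₂ x₃ v₁ v₂ v₃ hsep _ _ _ _ _ _ hH _ t ht _ hmin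
  obtain ⟨h13, h23⟩ := hmin
  obtain ⟨hne12, hne13, hne23⟩ := hsep t ht
  have hE := hH t ht
  set r := ‖x₁ t - x₂ t‖ with hrdef
  set a := ‖v₁ t‖ with hadef
  set b := ‖v₂ t‖ with hbdef
  have hr : 0 < r := norm_sub_pos_iff.mpr hne12
  have hr13 : 0 < ‖x₁ t - x₃ t‖ := norm_sub_pos_iff.mpr hne13
  have hr23 : 0 < ‖x₂ t - x₃ t‖ := norm_sub_pos_iff.mpr hne23
  -- potential bounds
  have hU13 : m₁ * m₃ / ‖x₁ t - x₃ t‖ ≤ m₁ * m₃ / r := by gcongr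
  have hU23 : m₂ * m₃ / ‖x₂ t - x₃ t‖ ≤ m₂ * m₃ / r := by gcongr
  have hsum : m₁ * m₂ / r + m₁ * m₃ / r + m₂ * m₃ / r = M / r := by rw [hMdef]; ring
  have hUle : m₁ * m₂ / ‖x₁ t - x₂ t‖ + m₁ * m₃ / ‖x₁ t - x₃ t‖ +
      m₂ * m₃ / ‖x₂ t - x₃ t‖ ≤ M / r := by
    rw [← hsum, ← hrdef]; linarith
  have hv3 : 0 ≤ ‖v₃ t‖ ^ 2 := sq_nonneg _
  -- kinetic bounds
  have hKa : m₁ * a ^ 2 ≤ 2 * (M / r) := by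
    linarith [mul_nonneg hm₂.le (sq_nonneg b), mul_nonneg hm₃.le hv3]
  have hKb : m₂ * b ^ 2 ≤ 2 * (M / r) := by
    linarith [mul_nonneg hm₁.le (sq_nonneg a), mul_nonneg hm₃.le hv3]
  have hUge : h ≤ M / r := by
    linarith [mul_nonneg hm₁.le (sq_nonneg a), mul_nonneg hm₂.le (sq_nonneg b),
      mul_nonneg hm₃.le hv3]
  have hhr : h * r ≤ M := (le_div_iff₀ hr).mp hUge
  have hfr : 2 * (M / r) * r = 2 * M := by field_simp
  have hKar : m₁ * a ^ 2 * r ≤ 2 * M := by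
    have h' := mul_le_mul_of_nonneg_right hKa hr.le
    linarith
  have hKbr : m₂ * b ^ 2 * r ≤ 2 * M := by
    have h' := mul_le_mul_of_nonneg_right hKb hr.le
    linarith
  have key : (α * (r * (a + b))) ^ 2 ≤ c2 := by
    rw [hc2def]
    exact kepler_arith m₁ m₂ h M r a b α hm₁ hm₂ hh hM hr (norm_nonneg _) (norm_nonneg _)
      hα.le hhr hKar hKbr
  have hfin : α * (r * (a + b)) ≤ Real.sqrt c2 := by
    calc α * (r * (a + b)) = Real.sqrt ((α * (r * (a + b))) ^ 2) := by
          rw [Real.sqrt_sq (by positivity)]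
      _ ≤ Real.sqrt c2 := Real.sqrt_le_sqrt key
  have hcr := cross3_norm_le (x₁ t - x₂ t) (v₁ t - v₂ t)
  have hvd : ‖v₁ t - v₂ t‖ ≤ a + b := norm_sub_le _ _
  rw [norm_smul, Real.norm_eq_abs, abs_of_pos hα]
  have hle : ‖cross3 (x₁ t - x₂ t) (v₁ t - v₂ t)‖ ≤ r * (a + b) := by
    calc ‖cross3 (x₁ t - x₂ t) (v₁ t - v₂ t)‖ ≤ r * ‖v₁ t - v₂ t‖ := hcr
      _ ≤ r * (a + b) := by
          exact mul_le_mul_of_nonneg_left hvd hr.le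
  calc α * ‖cross3 (x₁ t - x₂ t) (v₁ t - v₂ t)‖ ≤ α * (r * (a + b)) :=
        mul_le_mul_of_nonneg_left hle hα.le
    _ ≤ Real.sqrt c2 := hfin
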